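/- Let d ≥ 1 and M > 0, let u_{0M}(x) = (4π)^{−(d−1)/2} χ_{[M,M+1]}(x₁) e^{−|x'|²/4}, and let u_M(t,x) = (4πt)^{−d/2} ∫_{ℝ^d} e^{−|x−y|²/(4t)} u_{0M}(y) dy be the corresponding heat solution. Let x₀ = (1, 0, …, 0) ∈ ℝ^d. Then for every t > 0, u_M(t, x₀) ≥ (1/2) e^{(M − 1/4)/(4t)} · u_M(t, 0). -/

import Mathlib

open Real MeasureTheory

/-- The initial datum `u_{0M}(x) = (4π)^{-(d-1)/2} χ_{[M,M+1]}(x₁) e^{-|x'|²/4}`, where a point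
of `ℝ^d` (with `d = k + 1`) is written as `x = (x₁, x') ∈ ℝ × ℝ^k`. -/
noncomputable def gaussianSlabDatum (k : ℕ) (M : ℝ) (x : ℝ × EuclideanSpace ℝ (Fin k)) : ℝ :=
  (4 * Real.pi) ^ (-(k : ℝ) / 2) * (Set.indicator (Set.Icc M (M + 1)) (fun _ => 1) x.1) *
    Real.exp (-‖x.2‖ ^ 2 / 4)

/-- The heat solution on `ℝ^d = ℝ × ℝ^k` (so `d = k + 1`) with initial datum `u₀`, given by
convolution with the Gaussian heat kernel; the Euclidean norm is written out explicitly as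
`|x - y|² = (x₁ - y₁)² + |x' - y'|²`. -/
noncomputable def heatSolutionProd (k : ℕ) (u₀ : ℝ × EuclideanSpace ℝ (Fin k) → ℝ)
    (t : ℝ) (x : ℝ × EuclideanSpace ℝ (Fin k)) : ℝ :=
  (4 * Real.pi * t) ^ (-((k : ℝ) + 1) / 2) *
    ∫ y : ℝ × EuclideanSpace ℝ (Fin k),
      Real.exp (-((x.1 - y.1) ^ 2 + ‖x.2 - y.2‖ ^ 2) / (4 * t)) * u₀ y

lemma oneD_key (t M : ℝ) (ht : 0 < t) (hM : 0 < M) :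
    (1 / 2) * Real.exp ((M - 1 / 4) / (4 * t)) *
        ∫ y in M..(M + 1), Real.exp (-(0 - y) ^ 2 / (4 * t))
      ≤ ∫ y in M..(M + 1), Real.exp (-(1 - y) ^ 2 / (4 * t)) := by
  set F : ℝ → ℝ := fun z => Real.exp (-z ^ 2 / (4 * t)) with hF
  have hFc : Continuous F := by fun_prop
  have hI : ∀ a b : ℝ, IntervalIntegrable F volume a b := fun a b => hFc.intervalIntegrable a b
  have hF0 : ∀ z, 0 ≤ F z := fun z => Real.exp_nonneg _
  set E : ℝ := Real.exp ((M - 1 / 4) / (4 * t)) with hE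
  -- LHS integrand is F
  have e0 : (∫ y in M..(M + 1), Real.exp (-(0 - y) ^ 2 / (4 * t))) = ∫ y in M..(M + 1), F y := by
    apply intervalIntegral.integral_congr
    intro y _
    simp only [hF]
    ring_nf
  -- RHS: substitute z = y - 1
  have e1 : (∫ y in M..(M + 1), Real.exp (-(1 - y) ^ 2 / (4 * t)))
      = ∫ z in (M - 1)..(M + 1 - 1), F z := by
    rw [← intervalIntegral.integral_comp_sub_right F 1]
    apply intervalIntegral.integral_congr
    intro y _
    simp only [hF]
    ring_nf
  have e1' : (M + 1 - 1 : ℝ) = M := by ring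
  -- drop [M-1, M-1/2]
  have e2 : (∫ z in (M - 1/2)..M, F z) ≤ ∫ z in (M - 1)..M, F z := by
    have hsplit : (∫ z in (M - 1)..(M - 1/2), F z) + ∫ z in (M - 1/2)..M, F z
        = ∫ z in (M - 1)..M, F z :=
      intervalIntegral.integral_add_adjacent_intervals (hI _ _) (hI _ _)
    have h0 : 0 ≤ ∫ z in (M - 1)..(M - 1/2), F z :=
      intervalIntegral.integral_nonneg (by linarith) (fun x _ => hF0 x)
    linarith
  -- substitute back: ∫_{M-1/2}^{M} F = ∫_M^{M+1/2} F (y - 1/2)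
  have e3 : (∫ z in (M - 1/2)..M, F z) = ∫ y in M..(M + 1/2), F (y - 1/2) := by
    rw [intervalIntegral.integral_comp_sub_right F (1/2)]
    norm_num
  -- pointwise comparison on [M, M+1/2]
  have e4 : (∫ y in M..(M + 1/2), E * F y) ≤ ∫ y in M..(M + 1/2), F (y - 1/2) := by
    apply intervalIntegral.integral_mono_on (by linarith)
    · exact (by fun_prop : Continuous fun y => E * F y).intervalIntegrable _ _
    · exact (by fun_prop : Continuous fun y => F (y - 1/2)).intervalIntegrable _ _
    · intro y hy
      obtain ⟨hy1, hy2⟩ := hy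
      simp only [hF, hE, ← Real.exp_add]
      apply Real.exp_le_exp.2
      rw [← add_div, div_le_div_iff₀ (by linarith) (by linarith)]
      nlinarith
  have e5 : (∫ y in M..(M + 1/2), E * F y) = E * ∫ y in M..(M + 1/2), F y :=
    intervalIntegral.integral_const_mul _ _
  -- second half is at most first half
  have e6 : (∫ y in (M + 1/2)..(M + 1), F y) ≤ ∫ y in M..(M + 1/2), F y := by
    have h1 : (∫ y in (M + 1/2)..(M + 1), F y) = ∫ y in M..(M + 1/2), F (y + 1/2) := by
      rw [intervalIntegral.integral_comp_add_right F (1/2),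
        show (M + 1/2 + 1/2 : ℝ) = M + 1 from by ring]
    rw [h1]
    apply intervalIntegral.integral_mono_on (by linarith)
    · exact (by fun_prop : Continuous fun y => F (y + 1/2)).intervalIntegrable _ _
    · exact hI _ _
    · intro y hy
      obtain ⟨hy1, hy2⟩ := hy
      simp only [hF]
      apply Real.exp_le_exp.2
      rw [div_le_div_iff₀ (by linarith) (by linarith)]
      nlinarith
  have e7 : (∫ y in M..(M + 1/2), F y) + ∫ y in (M + 1/2)..(M + 1), F y
      = ∫ y in M..(M + 1), F y :=
    intervalIntegral.integral_add_adjacent_intervals (hI _ _) (hI _ _)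
  have e8 : (1/2) * ∫ y in M..(M + 1), F y ≤ ∫ y in M..(M + 1/2), F y := by linarith
  have hE0 : (0:ℝ) ≤ E := Real.exp_nonneg _
  calc (1 / 2) * E * ∫ y in M..(M + 1), Real.exp (-(0 - y) ^ 2 / (4 * t))
      = E * ((1/2) * ∫ y in M..(M + 1), F y) := by rw [e0]; ring
    _ ≤ E * ∫ y in M..(M + 1/2), F y := mul_le_mul_of_nonneg_left e8 hE0
    _ = ∫ y in M..(M + 1/2), E * F y := e5.symm
    _ ≤ ∫ y in M..(M + 1/2), F (y - 1/2) := e4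
    _ = ∫ z in (M - 1/2)..M, F z := e3.symm
    _ ≤ ∫ z in (M - 1)..M, F z := e2
    _ = ∫ y in M..(M + 1), Real.exp (-(1 - y) ^ 2 / (4 * t)) := by rw [e1, e1']

lemma factorize (k : ℕ) (M t x₁ : ℝ) :
    heatSolutionProd k (gaussianSlabDatum k M) t (x₁, 0) =
      (4 * Real.pi * t) ^ (-((k : ℝ) + 1) / 2) *
        ((4 * Real.pi) ^ (-(k : ℝ) / 2) *
          ∫ y in M..(M + 1), Real.exp (-(x₁ - y) ^ 2 / (4 * t))) *
        ∫ z : EuclideanSpace ℝ (Fin k), Real.exp (-‖z‖ ^ 2 / (4 * t)) * Real.exp (-‖z‖ ^ 2 / 4) := by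
  set C : ℝ := (4 * Real.pi) ^ (-(k : ℝ) / 2) with hC
  set f : ℝ → ℝ := fun s =>
    C * Set.indicator (Set.Icc M (M + 1)) (fun y => Real.exp (-(x₁ - y) ^ 2 / (4 * t))) s with hf
  set g : EuclideanSpace ℝ (Fin k) → ℝ :=
    fun z => Real.exp (-‖z‖ ^ 2 / (4 * t)) * Real.exp (-‖z‖ ^ 2 / 4) with hg
  have hpt : ∀ y : ℝ × EuclideanSpace ℝ (Fin k),
      Real.exp (-(((x₁, (0 : EuclideanSpace ℝ (Fin k))).1 - y.1) ^ 2
          + ‖((x₁, (0 : EuclideanSpace ℝ (Fin k))).2 - y.2)‖ ^ 2) / (4 * t)) *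
        gaussianSlabDatum k M y = f y.1 * g y.2 := by
    intro y
    dsimp only
    have hnorm : ‖(0 : EuclideanSpace ℝ (Fin k)) - y.2‖ = ‖y.2‖ := by simp
    rw [hnorm]
    simp only [hf, hg, gaussianSlabDatum]
    by_cases hy : y.1 ∈ Set.Icc M (M + 1)
    · simp only [Set.indicator_of_mem hy]
      rw [show -((x₁ - y.1) ^ 2 + ‖y.2‖ ^ 2) / (4 * t)
          = -(x₁ - y.1) ^ 2 / (4 * t) + -‖y.2‖ ^ 2 / (4 * t) from by ring, Real.exp_add]
      ring
    · simp [Set.indicator_of_notMem hy]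
  have hmain : (∫ y : ℝ × EuclideanSpace ℝ (Fin k),
      Real.exp (-(((x₁, (0 : EuclideanSpace ℝ (Fin k))).1 - y.1) ^ 2
          + ‖((x₁, (0 : EuclideanSpace ℝ (Fin k))).2 - y.2)‖ ^ 2) / (4 * t)) *
        gaussianSlabDatum k M y)
      = (∫ s : ℝ, f s) * ∫ z : EuclideanSpace ℝ (Fin k), g z := by
    rw [show (fun y : ℝ × EuclideanSpace ℝ (Fin k) =>
        Real.exp (-(((x₁, (0 : EuclideanSpace ℝ (Fin k))).1 - y.1) ^ 2
          + ‖((x₁, (0 : EuclideanSpace ℝ (Fin k))).2 - y.2)‖ ^ 2) / (4 * t)) *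
        gaussianSlabDatum k M y) = fun y => f y.1 * g y.2 from funext hpt]
    rw [MeasureTheory.Measure.volume_eq_prod]
    exact MeasureTheory.integral_prod_mul f g
  have hfint : (∫ s : ℝ, f s) = C * ∫ y in M..(M + 1), Real.exp (-(x₁ - y) ^ 2 / (4 * t)) := by
    rw [hf]
    rw [MeasureTheory.integral_const_mul]
    congr 1
    rw [MeasureTheory.integral_indicator measurableSet_Icc,
      MeasureTheory.integral_Icc_eq_integral_Ioc,
      ← intervalIntegral.integral_of_le (by linarith : M ≤ M + 1)]
  rw [heatSolutionProd, hmain, hfint]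
  ring

/-- For `d = k + 1 ≥ 1`, `M > 0`, the heat solution `u_M` with initial datum
`u_{0M}` satisfies, for every `t > 0`,
`u_M(t, x₀) ≥ (1/2) e^{(M - 1/4)/(4t)} u_M(t, 0)` where `x₀ = (1, 0, …, 0)`. -/
theorem heat_solution_slab_same_time_comparison
    (k : ℕ) (M : ℝ) (hM : 0 < M) :
    ∀ t : ℝ, 0 < t →
      (1 / 2) * Real.exp ((M - 1 / 4) / (4 * t)) *
          heatSolutionProd k (gaussianSlabDatum k M) t (0, 0) ≤
        heatSolutionProd k (gaussianSlabDatum k M) t (1, 0) := by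
  intro t ht
  rw [factorize k M t 0, factorize k M t 1]
  set P : ℝ := (4 * Real.pi * t) ^ (-((k : ℝ) + 1) / 2) with hP
  set C : ℝ := (4 * Real.pi) ^ (-(k : ℝ) / 2) with hC
  set W : ℝ := ∫ z : EuclideanSpace ℝ (Fin k),
    Real.exp (-‖z‖ ^ 2 / (4 * t)) * Real.exp (-‖z‖ ^ 2 / 4) with hW
  have hP0 : 0 ≤ P := Real.rpow_nonneg (by positivity) _
  have hC0 : 0 ≤ C := Real.rpow_nonneg (by positivity) _
  have hW0 : 0 ≤ W := MeasureTheory.integral_nonneg fun z => by positivity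
  have key := oneD_key t M ht hM
  set E : ℝ := Real.exp ((M - 1 / 4) / (4 * t)) with hE
  calc (1 / 2) * E * (P * (C * ∫ y in M..(M + 1), Real.exp (-(0 - y) ^ 2 / (4 * t))) * W)
      = (P * C * W) * ((1 / 2) * E * ∫ y in M..(M + 1), Real.exp (-(0 - y) ^ 2 / (4 * t))) := by
        ring
    _ ≤ (P * C * W) * ∫ y in M..(M + 1), Real.exp (-(1 - y) ^ 2 / (4 * t)) :=
        mul_le_mul_of_nonneg_left key (by positivity)
    _ = P * (C * ∫ y in M..(M + 1), Real.exp (-(1 - y) ^ 2 / (4 * t))) * W := by ring
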